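/- The NPMLE is finitely supported (Appendix Proposition): fix observations y₁, …, y_n ∈ ℝ and let Ĝ be a Borel probability measure on [-c, c] maximizing G ↦ ∑_{i=1}^n log ∫ e^{−(yᵢ−θ)²/(2σ²)} dG(θ) over all Borel probability measures on [-c, c]. Then the support of Ĝ contains at most n points. -/

import Mathlib

open MeasureTheory Set Polynomial Filter Topology

lemma hasDerivAt_poly_exp (p : Polynomial ℝ) (a x : ℝ) :
    HasDerivAt (fun t => p.eval t * Real.exp (a * t))
      ((p.derivative + C a * p).eval x * Real.exp (a * x)) x := by
  have h2 : HasDerivAt (fun t : ℝ => Real.exp (a * t)) (a * Real.exp (a * x)) x := by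
    simpa [mul_comm, Function.comp_def] using (Real.hasDerivAt_exp (a * x)).comp x ((hasDerivAt_id x).const_mul a)
  have := (p.hasDerivAt x).mul h2
  refine this.congr_deriv ?_
  simp [eval_add, eval_mul, eval_C]
  ring

lemma Qaux (p : Polynomial ℝ) (hp : p ≠ 0) (a : ℝ) (ha : a ≠ 0) :
    p.derivative + C a * p ≠ 0 ∧ (p.derivative + C a * p).natDegree = p.natDegree := by
  rcases eq_or_ne p.natDegree 0 with hd | hd
  · obtain ⟨c, rfl⟩ := (natDegree_eq_zero).1 hd
    have hc : c ≠ 0 := by rintro rfl; simp at hp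
    have h0 : (C c).derivative + C a * C c = C (a * c) := by
      rw [derivative_C, zero_add, ← C_mul]
    rw [h0]
    exact ⟨fun h => mul_ne_zero ha hc (C_eq_zero.mp h), by rw [natDegree_C, natDegree_C]⟩
  · have h1 : (p.derivative).natDegree < (C a * p).natDegree := by
      rw [natDegree_C_mul ha]
      exact natDegree_derivative_lt hd
    have h2 : (p.derivative + C a * p).natDegree = p.natDegree := by
      rw [natDegree_add_eq_right_of_natDegree_lt h1, natDegree_C_mul ha]
    refine ⟨fun h => hd ?_, h2⟩
    rw [← h2, h, natDegree_zero]

lemma rolle_finset (g g' : ℝ → ℝ) (hg : ∀ x, HasDerivAt g (g' x) x)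
    (T : Finset ℝ) (hT : ∀ x ∈ T, g x = 0) :
    ∃ T' : Finset ℝ, (∀ x ∈ T', g' x = 0) ∧ T.card - 1 ≤ T'.card := by
  rcases le_or_gt T.card 1 with h1 | h1
  · exact ⟨∅, by simp, by omega⟩
  · set k := T.card with hk
    have e := T.orderEmbOfFin (rfl : T.card = k)
    set e := T.orderEmbOfFin (rfl : T.card = k) with he
    have hmono : StrictMono e := e.strictMono
    have hgc : Continuous g := by
      have : Differentiable ℝ g := fun x => (hg x).differentiableAt
      exact this.continuous
    have key : ∀ i : Fin (k - 1), ∃ z ∈ Ioo (e ⟨i.1, by omega⟩) (e ⟨i.1 + 1, by omega⟩), g' z = 0 := by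
      intro i
      have hlt : e ⟨i.1, by omega⟩ < e ⟨i.1 + 1, by omega⟩ := hmono (by simp [Fin.lt_def])
      exact exists_hasDerivAt_eq_zero hlt hgc.continuousOn
        (by rw [hT _ (T.orderEmbOfFin_mem rfl _), hT _ (T.orderEmbOfFin_mem rfl _)])
        (fun x _ => hg x)
    choose z hz1 hz2 using key
    have hzmono : StrictMono z := by
      intro i j hij
      calc z i < e ⟨i.1 + 1, by omega⟩ := (hz1 i).2
        _ ≤ e ⟨j.1, by omega⟩ := hmono.monotone (by simp [Fin.le_def]; omega)
        _ < z j := (hz1 j).1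
    refine ⟨Finset.image z Finset.univ, ?_, ?_⟩
    · intro x hx
      obtain ⟨i, _, rfl⟩ := Finset.mem_image.1 hx
      exact hz2 i
    · rw [Finset.card_image_of_injective _ hzmono.injective, Finset.card_univ, Fintype.card_fin]

lemma expPoly_card_zeros : ∀ (N : ℕ) (s : Finset ℝ) (P : ℝ → Polynomial ℝ),
    s.Nonempty → (∀ v ∈ s, P v ≠ 0) →
    (∑ v ∈ s, ((P v).natDegree + 1)) = N →
    ∀ T : Finset ℝ, (∀ x ∈ T, ∑ v ∈ s, (P v).eval x * Real.exp (v * x) = 0) →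
    T.card < N := by
  intro N
  induction N with
  | zero =>
    intro s P hne hP hw T hT
    exfalso
    obtain ⟨v₀, hv₀⟩ := hne
    have : (P v₀).natDegree + 1 ≤ ∑ v ∈ s, ((P v).natDegree + 1) :=
      Finset.single_le_sum (f := fun v => (P v).natDegree + 1) (fun _ _ => Nat.zero_le _) hv₀
    omega
  | succ N ih =>
    intro s P hne hP hw T hT
    obtain ⟨v₀, hv₀⟩ := hne
    rcases T.eq_empty_or_nonempty with rfl | hTne
    · simp
    set Q : ℝ → Polynomial ℝ := fun v => (P v).derivative + C (v - v₀) * (P v) with hQ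
    have hQne : ∀ v ∈ s, v ≠ v₀ → Q v ≠ 0 ∧ (Q v).natDegree = (P v).natDegree := by
      intro v hv hvne
      exact Qaux (P v) (hP v hv) (v - v₀) (sub_ne_zero.2 hvne)
    have hQv₀ : Q v₀ = (P v₀).derivative := by simp [hQ]
    set s' : Finset ℝ := s.filter (fun v => Q v ≠ 0) with hs'
    rcases s'.eq_empty_or_nonempty with hs'e | hs'ne
    · -- all Q v = 0 on s, so s = {v₀} and P v₀ constant; f has no zeros
      exfalso
      have hallQ : ∀ v ∈ s, Q v = 0 := by
        intro v hv
        by_contra h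
        exact Finset.notMem_empty v (hs'e ▸ Finset.mem_filter.2 ⟨hv, h⟩)
      have hseq : ∀ v ∈ s, v = v₀ := by
        intro v hv
        by_contra h
        exact (hQne v hv h).1 (hallQ v hv)
      have hss : s = {v₀} := by
        apply Finset.ext
        intro v
        simp only [Finset.mem_singleton]
        exact ⟨fun hv => hseq v hv, fun h => h ▸ hv₀⟩
      have hder : (P v₀).derivative = 0 := hQv₀ ▸ hallQ v₀ hv₀
      obtain ⟨a, ha⟩ := natDegree_eq_zero.1 (natDegree_eq_zero_of_derivative_eq_zero hder)
      have hane : a ≠ 0 := by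
        rintro rfl
        exact hP v₀ hv₀ (by simp [← ha])
      obtain ⟨x, hx⟩ := hTne
      have := hT x hx
      rw [hss] at this
      simp only [Finset.sum_singleton, ← ha, eval_C] at this
      rcases mul_eq_zero.1 this with h | h
      · exact hane h
      · exact (Real.exp_ne_zero _) h
    · -- main induction step
      have hsub : s' ⊆ s := Finset.filter_subset _ _
      -- g and its derivative
      set g : ℝ → ℝ := fun x => ∑ v ∈ s, (P v).eval x * Real.exp ((v - v₀) * x) with hg
      set g' : ℝ → ℝ := fun x => ∑ v ∈ s, (Q v).eval x * Real.exp ((v - v₀) * x) with hg'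
      have hderiv : ∀ x, HasDerivAt g (g' x) x := by
        intro x
        exact HasDerivAt.fun_sum (fun v _ => hasDerivAt_poly_exp (P v) (v - v₀) x)
      have hgT : ∀ x ∈ T, g x = 0 := by
        intro x hx
        have h0 := hT x hx
        have : g x = (∑ v ∈ s, (P v).eval x * Real.exp (v * x)) * Real.exp (-(v₀ * x)) := by
          rw [Finset.sum_mul]
          refine Finset.sum_congr rfl (fun v _ => ?_)
          rw [mul_assoc, ← Real.exp_add]
          ring_nf
        rw [this, h0, zero_mul]
      obtain ⟨T', hT'zero, hT'card⟩ := rolle_finset g g' hderiv T hgT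
      -- zeros of g' are zeros of the reduced system
      have hg'eq : ∀ x, g' x = ∑ v ∈ s', (Q v).eval x * Real.exp ((v - v₀) * x) := by
        intro x
        rw [hg']
        exact (Finset.sum_subset hsub (fun v hv hvn => by
          have : Q v = 0 := by
            by_contra h
            exact hvn (Finset.mem_filter.2 ⟨hv, h⟩)
          simp [this])).symm
      -- reindex by w = v - v₀
      set s'' : Finset ℝ := s'.image (fun v => v - v₀) with hs''
      set P'' : ℝ → Polynomial ℝ := fun w => Q (w + v₀) with hP''
      have hinj : ∀ a ∈ s', ∀ b ∈ s', a - v₀ = b - v₀ → a = b := by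
        intro a _ b _ h; linarith
      have hs''ne : s''.Nonempty := hs'ne.image _
      have hP''ne : ∀ w ∈ s'', P'' w ≠ 0 := by
        intro w hw
        obtain ⟨v, hv, rfl⟩ := Finset.mem_image.1 hw
        simpa [hP'', sub_add_cancel] using (Finset.mem_filter.1 hv).2
      -- weight computation
      have hwQ : ∑ w ∈ s'', ((P'' w).natDegree + 1) = ∑ v ∈ s', ((Q v).natDegree + 1) := by
        rw [Finset.sum_image hinj]
        exact Finset.sum_congr rfl (fun v _ => by simp [hP'', sub_add_cancel])
      have hweight : ∑ v ∈ s', ((Q v).natDegree + 1) = N := by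
        have hv₀s' : s'.erase v₀ = s.erase v₀ := by
          apply Finset.ext
          intro v
          simp only [Finset.mem_erase, hs', Finset.mem_filter]
          constructor
          · rintro ⟨h1, h2, _⟩; exact ⟨h1, h2⟩
          · rintro ⟨h1, h2⟩; exact ⟨h1, h2, (hQne v h2 h1).1⟩
        have herase_sum : ∑ v ∈ s.erase v₀, ((Q v).natDegree + 1)
            = ∑ v ∈ s.erase v₀, ((P v).natDegree + 1) := by
          refine Finset.sum_congr rfl (fun v hv => ?_)
          obtain ⟨h1, h2⟩ := Finset.mem_erase.1 hv
          rw [(hQne v h2 h1).2]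
        have hsum_s : ∑ v ∈ s, ((P v).natDegree + 1)
            = ((P v₀).natDegree + 1) + ∑ v ∈ s.erase v₀, ((P v).natDegree + 1) :=
          (Finset.add_sum_erase s _ hv₀).symm
        by_cases hQ0 : Q v₀ = 0
        · have hv₀ns' : v₀ ∉ s' := fun h => (Finset.mem_filter.1 h).2 hQ0
          have : s' = s.erase v₀ := by
            rw [← hv₀s']
            exact (Finset.erase_eq_of_notMem hv₀ns').symm
          rw [this, herase_sum]
          have hd0 : (P v₀).natDegree = 0 :=
            natDegree_eq_zero_of_derivative_eq_zero (hQv₀ ▸ hQ0)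
          omega
        · have hv₀s'' : v₀ ∈ s' := Finset.mem_filter.2 ⟨hv₀, hQ0⟩
          have h1 : ∑ v ∈ s', ((Q v).natDegree + 1)
              = ((Q v₀).natDegree + 1) + ∑ v ∈ s'.erase v₀, ((Q v).natDegree + 1) :=
            (Finset.add_sum_erase s' _ hv₀s'').symm
          rw [h1, hv₀s', herase_sum]
          have hdpos : (P v₀).natDegree ≠ 0 := by
            intro h0
            obtain ⟨a, ha⟩ := natDegree_eq_zero.1 h0
            apply hQ0
            rw [hQv₀, ← ha, derivative_C]
          have : (Q v₀).natDegree = (P v₀).natDegree - 1 := by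
            rw [hQv₀]
            exact natDegree_eq_of_degree_eq_some
              (degree_derivative_eq _ (Nat.pos_of_ne_zero hdpos))
          omega
      have hT'zeros : ∀ x ∈ T', ∑ w ∈ s'', (P'' w).eval x * Real.exp (w * x) = 0 := by
        intro x hx
        have : ∑ w ∈ s'', (P'' w).eval x * Real.exp (w * x)
            = ∑ v ∈ s', (Q v).eval x * Real.exp ((v - v₀) * x) := by
          rw [Finset.sum_image hinj]
          exact Finset.sum_congr rfl (fun v _ => by simp [hP'', sub_add_cancel])
        rw [this, ← hg'eq]
        exact hT'zero x hx
      have := ih s'' P'' hs''ne hP''ne (hwQ.trans hweight) T' hT'zeros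
      omega


lemma exists_min_left (f : ℝ → ℝ) (hf : Differentiable ℝ f) (L : ℝ) (hL : 0 < L)
    (htend : Tendsto f atBot (𝓝 L)) (lo hi p : ℝ)
    (hlo : lo ≤ p) (hhi : p < hi) (hnn : ∀ x ∈ Icc lo hi, 0 ≤ f x) (hp : f p = 0) :
    ∃ w, w ≤ p ∧ deriv f w = 0 := by
  rcases lt_or_eq_of_le hlo with hlt | heq
  · refine ⟨p, le_refl p, ?_⟩
    have hmin : IsLocalMin f p := by
      filter_upwards [Ioo_mem_nhds hlt hhi] with x hx
      rw [hp]
      exact hnn x (Ioo_subset_Icc_self hx)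
    exact hmin.deriv_eq_zero
  · by_cases hneg : ∃ ζ, ζ < p ∧ f ζ < 0
    · obtain ⟨ζ, hζ1, hζ2⟩ := hneg
      obtain ⟨A, hA⟩ := Filter.eventually_atBot.1
        (htend.eventually (eventually_ge_nhds (by linarith : L / 2 < L)))
      set A' := min A (ζ - 1) with hA'
      have hA'p : A' < p := by
        have : A' ≤ ζ - 1 := min_le_right _ _
        linarith
      obtain ⟨w, hwmem, hwmin⟩ := isCompact_Icc.exists_isMinOn
        (nonempty_Icc.2 hA'p.le) hf.continuous.continuousOn
      have hζmem : ζ ∈ Icc A' p := ⟨by have := min_le_right A (ζ - 1); linarith, hζ1.le⟩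
      have hwζ : f w ≤ f ζ := hwmin hζmem
      have hwA' : A' < w := by
        rcases lt_or_eq_of_le hwmem.1 with h | h
        · exact h
        · exfalso
          have : L / 2 ≤ f A' := hA A' (min_le_left _ _)
          rw [h] at this
          linarith
      have hwp : w < p := by
        rcases lt_or_eq_of_le hwmem.2 with h | h
        · exact h
        · exfalso; rw [h, hp] at hwζ; linarith
      refine ⟨w, hwp.le, ?_⟩
      exact (hwmin.isLocalMin (Icc_mem_nhds hwA' hwp)).deriv_eq_zero
    · push_neg at hneg
      refine ⟨p, le_refl p, ?_⟩
      have hmin : IsLocalMin f p := by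
        filter_upwards [Iio_mem_nhds hhi] with x hx
        rw [hp]
        rcases lt_or_ge x p with h | h
        · exact hneg x h
        · exact hnn x ⟨hlo.trans h, hx.le⟩
      exact hmin.deriv_eq_zero


lemma integrable_of_bdd {μ : Measure ℝ} [IsFiniteMeasure μ] {f : ℝ → ℝ} (hf : Continuous f)
    (hb : ∀ t, ‖f t‖ ≤ 1) : Integrable f μ :=
  ⟨hf.aestronglyMeasurable, HasFiniteIntegral.of_bounded (C := 1) (Filter.Eventually.of_forall hb)⟩

/-- The (topological) support of a measure on `ℝ`: the set of points all of whose
neighborhoods have positive measure. -/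
def measureSupport (μ : MeasureTheory.Measure ℝ) : Set ℝ :=
  {x : ℝ | ∀ U ∈ nhds x, μ U ≠ 0}

/-- **The NPMLE is finitely supported**: any Borel probability measure `Ĝ` on `[-c, c]`
maximizing the log-likelihood `G ↦ ∑ᵢ log ∫ e^{−(yᵢ−θ)²/(2σ²)} dG(θ)` has at most `n`
support points. -/
theorem npmle_finite_support (σ c : ℝ) (hσ : 0 < σ) (hc : 0 < c)
    (n : ℕ) (hn : 0 < n) (y : Fin n → ℝ)
    (Ghat : Measure ℝ) [IsProbabilityMeasure Ghat] (hGhatSupp : ∀ᵐ t ∂Ghat, t ∈ Icc (-c) c)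
    (hMLE : ∀ (G : Measure ℝ), IsProbabilityMeasure G → (∀ᵐ t ∂G, t ∈ Icc (-c) c) →
      ∑ i, Real.log (∫ t, Real.exp (-(y i - t) ^ 2 / (2 * σ ^ 2)) ∂G)
        ≤ ∑ i, Real.log (∫ t, Real.exp (-(y i - t) ^ 2 / (2 * σ ^ 2)) ∂Ghat)) :
    (measureSupport Ghat).Finite ∧ (measureSupport Ghat).ncard ≤ n := by
  classical
  have hσ2 : (0:ℝ) < σ ^ 2 := by positivity
  set φ : Fin n → ℝ → ℝ := fun i t => Real.exp (-(y i - t) ^ 2 / (2 * σ ^ 2)) with hφdef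
  have hφcont : ∀ i, Continuous (φ i) :=
    fun i => Real.continuous_exp.comp (by fun_prop)
  have hφpos : ∀ i t, 0 < φ i t := fun i t => Real.exp_pos _
  have hφle : ∀ i t, φ i t ≤ 1 := by
    intro i t
    rw [← Real.exp_zero]
    exact Real.exp_le_exp.2 (div_nonpos_of_nonpos_of_nonneg (neg_nonpos.2 (by positivity)) (by positivity))
  have hφbd : ∀ i t, ‖φ i t‖ ≤ 1 := by
    intro i t
    rw [Real.norm_eq_abs, abs_of_pos (hφpos i t)]
    exact hφle i t
  set L : Fin n → ℝ := fun i => ∫ t, φ i t ∂Ghat with hLdef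
  have hφintG : ∀ i, Integrable (φ i) Ghat := fun i => integrable_of_bdd (hφcont i) (hφbd i)
  have hL : ∀ i, 0 < L i := by
    intro i
    have hmono : ∀ᵐ t ∂Ghat, Real.exp (-(|y i| + c) ^ 2 / (2 * σ ^ 2)) ≤ φ i t := by
      filter_upwards [hGhatSupp] with t ht
      apply Real.exp_le_exp.2
      rw [div_le_div_iff_of_pos_right (by positivity)]
      have h1 : -c ≤ t := ht.1
      have h2 : t ≤ c := ht.2
      nlinarith [le_abs_self (y i), neg_abs_le (y i), abs_nonneg (y i)]
    have := integral_mono_ae (integrable_const _) (hφintG i) hmono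
    have h0 : ∫ _ : ℝ, Real.exp (-(|y i| + c) ^ 2 / (2 * σ ^ 2)) ∂Ghat
        = Real.exp (-(|y i| + c) ^ 2 / (2 * σ ^ 2)) := by
      simp [measure_univ]
    calc (0:ℝ) < Real.exp (-(|y i| + c) ^ 2 / (2 * σ ^ 2)) := Real.exp_pos _
      _ ≤ L i := by rw [← h0]; exact this
  -- First order condition
  have hKey : ∀ θ ∈ Icc (-c) c, (∑ i, φ i θ / L i) ≤ (n : ℝ) := by
    intro θ hθ
    set A : Fin n → ℝ := fun i => φ i θ - L i with hAdef
    have hper : ∀ ε : ℝ, ε ∈ Ioo (0:ℝ) 1 →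
        (∑ i, Real.log (L i + ε * A i)) ≤ ∑ i, Real.log (L i) := by
      intro ε hε
      set G : Measure ℝ :=
        (ENNReal.ofReal (1 - ε)) • Ghat + (ENNReal.ofReal ε) • (Measure.dirac θ) with hGdef
      have hprob : IsProbabilityMeasure G := by
        constructor
        rw [hGdef]
        simp only [Measure.add_apply, Measure.smul_apply, measure_univ, smul_eq_mul, mul_one]
        rw [← ENNReal.ofReal_add (by linarith [hε.2]) hε.1.le]
        norm_num
      have hsupp : ∀ᵐ t ∂G, t ∈ Icc (-c) c := by
        rw [hGdef]
        rw [ae_add_measure_iff]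
        constructor
        · exact Measure.ae_smul_measure hGhatSupp _
        · exact Measure.ae_smul_measure
            ((ae_dirac_iff (a := θ) (p := fun t => t ∈ Icc (-c) c) measurableSet_Icc).2 hθ) _
      have hIG : ∀ i, ∫ t, φ i t ∂G = L i + ε * A i := by
        intro i
        have hint1 : Integrable (φ i) ((ENNReal.ofReal (1 - ε)) • Ghat) := by
          rw [integrable_smul_measure (by simp only [ne_eq, ENNReal.ofReal_eq_zero, not_le]; linarith [hε.2]) ENNReal.ofReal_ne_top]
          exact hφintG i
        have hint2 : Integrable (φ i) ((ENNReal.ofReal ε) • (Measure.dirac θ)) := by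
          rw [integrable_smul_measure (by simp only [ne_eq, ENNReal.ofReal_eq_zero, not_le]; linarith [hε.1]) ENNReal.ofReal_ne_top]
          exact integrable_of_bdd (hφcont i) (hφbd i)
        rw [hGdef, integral_add_measure hint1 hint2, integral_smul_measure, integral_smul_measure,
          integral_dirac, ENNReal.toReal_ofReal (by linarith [hε.2]),
          ENNReal.toReal_ofReal hε.1.le]
        simp only [smul_eq_mul, hAdef]
        ring
      have := hMLE G hprob hsupp
      calc ∑ i, Real.log (L i + ε * A i) = ∑ i, Real.log (∫ t, φ i t ∂G) := by
            refine Finset.sum_congr rfl (fun i _ => ?_)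
            rw [hIG i]
        _ ≤ ∑ i, Real.log (L i) := this
    have hder : HasDerivAt (fun ε => ∑ i, Real.log (L i + ε * A i)) (∑ i, A i / L i) 0 := by
      apply HasDerivAt.fun_sum
      intro i _
      have h1 : HasDerivAt (fun ε : ℝ => L i + ε * A i) (A i) 0 := by
        simpa using ((hasDerivAt_id (0:ℝ)).mul_const (A i)).const_add (L i)
      have hne : L i + 0 * A i ≠ 0 := by simpa using (hL i).ne'
      have h2 := (Real.hasDerivAt_log hne).comp 0 h1
      simpa [div_eq_mul_inv, mul_comm, Function.comp_def] using h2
    have hslope : ∀ᶠ ε in 𝓝[>] (0:ℝ),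
        slope (fun ε => ∑ i, Real.log (L i + ε * A i)) 0 ε ≤ 0 := by
      filter_upwards [Ioo_mem_nhdsGT_of_mem (left_mem_Ico.2 one_pos)] with ε hε
      rw [slope_def_field]
      apply div_nonpos_of_nonpos_of_nonneg ?_ (by simpa using hε.1.le)
      have h1 := hper ε hε
      have h0 : (∑ i, Real.log (L i + (0:ℝ) * A i)) = ∑ i, Real.log (L i) := by simp
      simp only [sub_nonpos]
      calc ∑ i, Real.log (L i + ε * A i) ≤ ∑ i, Real.log (L i) := h1
        _ = ∑ i, Real.log (L i + (0:ℝ) * A i) := h0.symm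
    have htend : Tendsto (slope (fun ε => ∑ i, Real.log (L i + ε * A i)) 0)
        (𝓝[>] (0:ℝ)) (𝓝 (∑ i, A i / L i)) :=
      (hasDerivAt_iff_tendsto_slope.1 hder).mono_left
        (nhdsWithin_mono 0 (fun x hx => ne_of_gt hx))
    have hle : (∑ i, A i / L i) ≤ 0 := le_of_tendsto htend hslope
    have heq : ∑ i, A i / L i = (∑ i, φ i θ / L i) - n := by
      have h1 : ∀ i : Fin n, A i / L i = φ i θ / L i - 1 := by
        intro i
        show (φ i θ - L i) / L i = _
        rw [sub_div, div_self (hL i).ne']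
      rw [Finset.sum_congr rfl (fun i _ => h1 i), Finset.sum_sub_distrib]
      simp
    rw [heq] at hle
    linarith
  -- the gradient function
  set f : ℝ → ℝ := fun θ => (n:ℝ) - ∑ i, φ i θ / L i with hfdef
  have hfcont : Continuous f :=
    continuous_const.sub (continuous_finset_sum _ (fun i _ => (hφcont i).div_const _))
  have hfnn : ∀ θ ∈ Icc (-c) c, 0 ≤ f θ := by
    intro θ hθ
    have := hKey θ hθ
    rw [hfdef]
    simp only
    linarith
  have hφder : ∀ i θ, HasDerivAt (φ i) ((y i - θ) / σ^2 * φ i θ) θ := by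
    intro i θ
    have h2 : HasDerivAt (fun t : ℝ => (y i - t)) (-1) θ := by
      simpa using (hasDerivAt_id θ).const_sub (y i)
    have h1 : HasDerivAt (fun t : ℝ => -(y i - t)^2 / (2*σ^2)) ((y i - θ)/σ^2) θ := by
      have h3 := ((h2.pow 2).neg).div_const (2*σ^2)
      refine h3.congr_deriv ?_
      field_simp
      ring
    have h4 := h1.exp
    refine h4.congr_deriv ?_
    rw [hφdef]
    ring
  set f' : ℝ → ℝ := fun θ => ∑ i, (θ - y i)/σ^2 * (φ i θ / L i) with hf'def
  have hfder : ∀ θ, HasDerivAt f (f' θ) θ := by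
    intro θ
    have hsum : HasDerivAt (fun θ => ∑ i, φ i θ / L i)
        (∑ i, (y i - θ)/σ^2 * φ i θ / L i) θ :=
      HasDerivAt.fun_sum (fun i _ => ((hφder i θ).div_const (L i)))
    have h5 := hsum.const_sub (n:ℝ)
    refine h5.congr_deriv ?_
    rw [hf'def, ← Finset.sum_neg_distrib]
    exact Finset.sum_congr rfl (fun i _ => by ring)
  have hdiff : Differentiable ℝ f := fun x => (hfder x).differentiableAt
  -- behavior at -infinity
  have hfbot : Tendsto f atBot (𝓝 (n:ℝ)) := by
    have htphi : ∀ i : Fin n, Tendsto (φ i) atBot (𝓝 0) := by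
      intro i
      have h1 : Tendsto (fun θ : ℝ => y i - θ) atBot atTop :=
        tendsto_atTop_add_const_left _ _ tendsto_neg_atBot_atTop
      have h2 : Tendsto (fun θ : ℝ => (y i - θ)^2) atBot atTop :=
        (tendsto_pow_atTop two_ne_zero).comp h1
      have h3 := h2.atTop_mul_const_of_neg (show -(2*σ^2)⁻¹ < 0 by
        simp only [neg_neg, Left.neg_neg_iff]
        positivity)
      have h4 : (fun θ : ℝ => -(y i - θ)^2/(2*σ^2))
          = fun θ : ℝ => (y i - θ)^2 * (-(2*σ^2)⁻¹) := by
        funext θ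
        field_simp
      have h5 : Tendsto (fun θ : ℝ => -(y i - θ)^2/(2*σ^2)) atBot atBot := by
        rw [h4]; exact h3
      exact Real.tendsto_exp_atBot.comp h5
    have hsum : Tendsto (fun θ => ∑ i, φ i θ / L i) atBot (𝓝 0) := by
      have h6 := tendsto_finset_sum Finset.univ (fun (i : Fin n) _ => (htphi i).div_const (L i))
      simpa using h6
    have h7 : Tendsto (fun θ => (n:ℝ) - ∑ i, φ i θ / L i) atBot (𝓝 ((n:ℝ) - 0)) :=
      Tendsto.sub tendsto_const_nhds hsum
    simpa using h7
  -- support facts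
  have hSuppIcc : measureSupport Ghat ⊆ Icc (-c) c := by
    intro x hx
    by_contra hxn
    refine hx _ ((isClosed_Icc.isOpen_compl).mem_nhds hxn) ?_
    have := ae_iff.1 hGhatSupp
    simpa [Set.compl_def] using this
  have hfintegrable : Integrable f Ghat :=
    (integrable_const _).sub (integrable_finset_sum _ (fun i _ => (hφintG i).div_const _))
  have hIf : ∫ θ, f θ ∂Ghat = 0 := by
    rw [hfdef]
    rw [integral_sub (integrable_const _)
      (integrable_finset_sum _ (fun i _ => (hφintG i).div_const _))]
    rw [integral_const, integral_finset_sum _ (fun i _ => (hφintG i).div_const _)]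
    have h8 : ∀ i : Fin n, (∫ θ, φ i θ / L i ∂Ghat) = 1 := fun i => by
      rw [integral_div, div_self (hL i).ne']
    rw [Finset.sum_congr rfl (fun i _ => h8 i)]
    simp [measure_univ]
  have hae0 : ∀ᵐ θ ∂Ghat, f θ = 0 := by
    have hnn : 0 ≤ᵐ[Ghat] f := by
      filter_upwards [hGhatSupp] with t ht
      exact hfnn t ht
    exact (integral_eq_zero_iff_of_nonneg_ae hnn hfintegrable).1 hIf
  have hSupp0 : ∀ x ∈ measureSupport Ghat, f x = 0 := by
    intro x hx
    by_contra hne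
    have hpos : 0 < f x := lt_of_le_of_ne (hfnn x (hSuppIcc hx)) (Ne.symm hne)
    have hU : f ⁻¹' (Ioi (f x / 2)) ∈ 𝓝 x :=
      (isOpen_Ioi.preimage hfcont).mem_nhds (by simpa [mem_preimage, mem_Ioi] using half_lt_self hpos)
    refine hx _ hU (measure_mono_null (fun t ht => ?_) (ae_iff.1 hae0))
    simp only [mem_preimage, mem_Ioi] at ht
    simp only [mem_setOf_eq]
    intro h0
    rw [h0] at ht
    linarith [half_lt_self hpos]
  -- the exponential-polynomial system
  set S : Finset ℝ := Finset.image (fun i => y i / σ^2) Finset.univ with hSdef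
  set m : ℕ := S.card with hmdef
  have hSne : S.Nonempty := Finset.Nonempty.image ⟨⟨0, hn⟩, Finset.mem_univ _⟩ _
  have hm1 : 1 ≤ m := Finset.card_pos.2 hSne
  have hmn : m ≤ n := le_trans Finset.card_image_le (by simp)
  set d : Fin n → ℝ := fun i => Real.exp (-(y i)^2/(2*σ^2)) / (σ^2 * L i) with hddef
  have hdpos : ∀ i, 0 < d i := fun i => div_pos (Real.exp_pos _) (mul_pos hσ2 (hL i))
  set D : ℝ → ℝ := fun v => ∑ j ∈ Finset.univ.filter (fun j => y j / σ^2 = v), d j with hDdef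
  set P : ℝ → Polynomial ℝ := fun v => C (D v) * (X - C (v * σ^2)) with hPdef
  have hDpos : ∀ v ∈ S, 0 < D v := by
    intro v hv
    obtain ⟨i, _, hi⟩ := Finset.mem_image.1 hv
    refine Finset.sum_pos (fun j _ => hdpos j) ⟨i, Finset.mem_filter.2 ⟨Finset.mem_univ _, hi⟩⟩
  have hPne : ∀ v ∈ S, P v ≠ 0 := by
    intro v hv
    rw [hPdef]
    exact mul_ne_zero (by simp [(hDpos v hv).ne']) (X_sub_C_ne_zero _)
  have hweight : ∑ v ∈ S, ((P v).natDegree + 1) = 2 * m := by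
    have h9 : ∀ v ∈ S, ((P v).natDegree + 1) = 2 := by
      intro v hv
      rw [hPdef]
      simp only
      rw [natDegree_C_mul (hDpos v hv).ne', natDegree_X_sub_C]
    rw [Finset.sum_congr rfl h9, Finset.sum_const, smul_eq_mul]
    omega
  have hFzero : ∀ x, deriv f x = 0 → ∑ v ∈ S, (P v).eval x * Real.exp (v * x) = 0 := by
    intro x hx
    have hf'0 : f' x = 0 := by rw [← (hfder x).deriv]; exact hx
    have hkey : ∑ v ∈ S, (P v).eval x * Real.exp (v * x)
        = f' x * Real.exp (x^2/(2*σ^2)) := by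
      rw [hSdef]
      rw [Finset.sum_image' (fun i => d i * (x - y i) * Real.exp (y i / σ^2 * x)) ?_]
      · rw [hf'def, Finset.sum_mul]
        refine Finset.sum_congr rfl (fun i _ => ?_)
        have hexp : Real.exp (-(y i - x)^2/(2*σ^2)) * Real.exp (x^2/(2*σ^2))
            = Real.exp (-(y i)^2/(2*σ^2)) * Real.exp (y i / σ^2 * x) := by
          rw [← Real.exp_add, ← Real.exp_add]
          congr 1
          field_simp
          ring
        have hstep2 : (x - y i)/σ^2 * (φ i x / L i) * Real.exp (x^2/(2*σ^2))
            = (x - y i)/(σ^2 * L i)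
              * (Real.exp (-(y i - x)^2/(2*σ^2)) * Real.exp (x^2/(2*σ^2))) := by
          rw [hφdef]
          ring
        rw [hstep2, hexp, hddef]
        ring
      · intro i _
        rw [hPdef]
        simp only [eval_mul, eval_C, eval_sub, eval_X]
        have hyy : y i / σ^2 * σ^2 = y i := by field_simp
        rw [hyy]
        have hstep : ∀ j ∈ Finset.univ.filter (fun j => y j / σ^2 = y i / σ^2),
            d j * (x - y j) * Real.exp (y j / σ^2 * x)
              = d j * ((x - y i) * Real.exp (y i / σ^2 * x)) := by
          intro j hj
          have h1 : y j / σ^2 = y i / σ^2 := (Finset.mem_filter.1 hj).2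
          have h2 : y j = y i := by
            field_simp at h1
            exact h1
          rw [h2]
          ring
        rw [Finset.sum_congr rfl hstep, ← Finset.sum_mul, hDdef]
        ring
    rw [hkey, hf'0, zero_mul]
  have hcount : ∀ T : Finset ℝ, (∀ x ∈ T, deriv f x = 0) → T.card < 2 * m :=
    fun T hT => expPoly_card_zeros (2*m) S P hSne hPne hweight T
      (fun x hx => hFzero x (hT x hx))
  -- the support bound
  have hTbound : ∀ T : Finset ℝ, ↑T ⊆ measureSupport Ghat → T.card ≤ m := by
    intro T hT
    by_contra hgt
    push_neg at hgt
    obtain ⟨T₂, hT₂sub, hT₂card⟩ := Finset.exists_subset_card_eq (show m+1 ≤ T.card from hgt)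
    set X : Fin (m+1) ↪o ℝ := T₂.orderEmbOfFin hT₂card with hXdef
    have hXmem : ∀ j, X j ∈ measureSupport Ghat :=
      fun j => hT (hT₂sub (T₂.orderEmbOfFin_mem hT₂card j))
    have hXIcc : ∀ j, X j ∈ Icc (-c) c := fun j => hSuppIcc (hXmem j)
    have hXzero : ∀ j, f (X j) = 0 := fun j => hSupp0 _ (hXmem j)
    have hXmono : StrictMono X := X.strictMono
    have hlast : ∀ j : Fin (m+1), X j ≤ X ⟨m, Nat.lt_succ_self m⟩ :=
      fun j => hXmono.monotone (by simp [Fin.le_def]; omega)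
    have hfirst : ∀ j : Fin (m+1), X 0 ≤ X j :=
      fun j => hXmono.monotone (by simp [Fin.le_def])
    have hn1 : (0:ℝ) < (n:ℝ) := by exact_mod_cast hn
    have hX0c : X 0 < c := by
      have h1 : X 0 < X ⟨m, Nat.lt_succ_self m⟩ := hXmono (by simp [Fin.lt_def]; omega)
      exact lt_of_lt_of_le h1 (hXIcc _).2
    obtain ⟨w₀, hw₀le, hw₀z⟩ := exists_min_left f hdiff (n:ℝ) hn1 hfbot (-c) c (X 0)
      (hXIcc 0).1 hX0c hfnn (hXzero 0)
    have hgaps : ∀ k : Fin m, ∃ w, w ∈ Ioo (X k.castSucc) (X k.succ) ∧ deriv f w = 0 := by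
      intro k
      exact exists_deriv_eq_zero (hXmono (Fin.castSucc_lt_succ (i := k)))
        hfcont.continuousOn (by rw [hXzero, hXzero])
    choose z hz1 hz2 using hgaps
    have hint : ∀ j : Fin (m+1), (0 : Fin (m+1)) < j → j < ⟨m, Nat.lt_succ_self m⟩ →
        deriv f (X j) = 0 := by
      intro j h0 hlt
      have hmin : IsLocalMin f (X j) := by
        have hm1' : -c < X j := lt_of_le_of_lt (hXIcc 0).1 (hXmono h0)
        have hm2 : X j < c := lt_of_lt_of_le (hXmono hlt) (hXIcc _).2
        filter_upwards [Ioo_mem_nhds hm1' hm2] with t ht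
        rw [hXzero j]
        exact hfnn t (Ioo_subset_Icc_self ht)
      exact hmin.deriv_eq_zero
    -- assemble the finset of critical points
    have hzmono : StrictMono z := by
      intro k l hkl
      calc z k < X k.succ := (hz1 k).2
        _ ≤ X l.castSucc := hXmono.monotone (by simp [Fin.le_def]; omega)
        _ < z l := (hz1 l).1
    have hzlb : ∀ k, X 0 < z k := by
      intro k
      exact lt_of_le_of_lt (hfirst k.castSucc) (hz1 k).1
    set Z₁ : Finset ℝ := Finset.image z Finset.univ with hZ₁def
    set Z₂ : Finset ℝ :=
      Finset.image (fun k : Fin (m-1) => X ⟨k.1+1, by omega⟩) Finset.univ with hZ₂def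
    have hZ₁card : Z₁.card = m := by
      rw [hZ₁def, Finset.card_image_of_injective _ hzmono.injective, Finset.card_univ,
        Fintype.card_fin]
    have hZ₂card : Z₂.card = m - 1 := by
      rw [hZ₂def, Finset.card_image_of_injective _ ?_, Finset.card_univ, Fintype.card_fin]
      intro a b hab
      have := hXmono.injective hab
      have h2 : a.1 + 1 = b.1 + 1 := by
        simpa [Fin.ext_iff] using this
      exact Fin.ext (by omega)
    have hdisj : Disjoint Z₁ Z₂ := by
      rw [Finset.disjoint_left]
      intro a ha hb
      obtain ⟨k, _, rfl⟩ := Finset.mem_image.1 ha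
      obtain ⟨l, _, hl⟩ := Finset.mem_image.1 hb
      rcases le_or_gt (l.1 + 1) k.1 with h | h
      · have : X ⟨l.1+1, by omega⟩ ≤ X k.castSucc := hXmono.monotone (by simp [Fin.le_def]; omega)
        have := lt_of_le_of_lt this (hz1 k).1
        rw [hl] at this
        exact lt_irrefl _ this
      · have : X k.succ ≤ X ⟨l.1+1, by omega⟩ := hXmono.monotone (by simp [Fin.le_def]; omega)
        have := lt_of_lt_of_le (hz1 k).2 this
        rw [hl] at this
        exact lt_irrefl _ this
    have hw₀notin : w₀ ∉ Z₁ ∪ Z₂ := by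
      intro hw
      rcases Finset.mem_union.1 hw with h | h
      · obtain ⟨k, _, hk⟩ := Finset.mem_image.1 h
        have := hzlb k
        rw [hk] at this
        linarith
      · obtain ⟨l, _, hl⟩ := Finset.mem_image.1 h
        have : X 0 < X ⟨l.1+1, by omega⟩ := hXmono (by simp [Fin.lt_def])
        rw [hl] at this
        linarith
    set Z : Finset ℝ := insert w₀ (Z₁ ∪ Z₂) with hZdef
    have hZcard : Z.card = 2 * m := by
      rw [hZdef, Finset.card_insert_of_notMem hw₀notin, Finset.card_union_of_disjoint hdisj,
        hZ₁card, hZ₂card]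
      omega
    have hZzero : ∀ x ∈ Z, deriv f x = 0 := by
      intro x hx
      rw [hZdef] at hx
      rcases Finset.mem_insert.1 hx with rfl | hx
      · exact hw₀z
      rcases Finset.mem_union.1 hx with h | h
      · obtain ⟨k, _, rfl⟩ := Finset.mem_image.1 h
        exact hz2 k
      · obtain ⟨l, _, rfl⟩ := Finset.mem_image.1 h
        exact hint _ (by simp [Fin.lt_def]) (by simp [Fin.lt_def]; omega)
    have := hcount Z hZzero
    omega
  -- conclude
  have hfin : (measureSupport Ghat).Finite := by
    by_contra hinf
    obtain ⟨T, hTs, hTcard⟩ := Set.Infinite.exists_subset_card_eq hinf (m+1)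
    have := hTbound T hTs
    omega
  refine ⟨hfin, ?_⟩
  have hcard : (measureSupport Ghat).ncard = hfin.toFinset.card :=
    Set.ncard_eq_toFinset_card _ hfin
  rw [hcard]
  exact le_trans (hTbound hfin.toFinset (by simp)) hmn
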